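/- Fix a finite set 𝔹 of vectors of ℕ^Σ whose images under the embedding ℕ^Σ → ℚ^Σ form a basis of the ℚ-vector space ℚ^Σ; for a Parikh vector v and b ∈ 𝔹, let ⟨v⟩_b ∈ ℚ denote the b-coordinate of v in this basis. Call a linear expression expr(u) · (⋃_{a∈A} expr(a))* homogeneous if for every b ∈ 𝔹 and all x, y ∈ A, ⟨x⟩_b > 0 implies ⟨y⟩_b ≥ 0. Then every commutative regular expression is provably equal (with respect to ≡) to a finite union of homogeneous linear expressions. -/

import Mathlib

namespace CKAnote

/-- Commutative regular expressions over an alphabet `α`. -/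
inductive CRE (α : Type) where
  | zero : CRE α
  | one : CRE α
  | letter : α → CRE α
  | mul : CRE α → CRE α → CRE α
  | union : CRE α → CRE α → CRE α
  | star : CRE α → CRE α

variable {α : Type} [Fintype α] [DecidableEq α]

/-- Semantics of a commutative regular expression as a set of Parikh vectors. -/
def sem : CRE α → Set (α → ℕ)
  | .zero => ∅
  | .one => {0}
  | .letter a => {Pi.single a 1}
  | .mul e f => {w | ∃ u ∈ sem e, ∃ v ∈ sem f, w = u + v}
  | .union e f => sem e ∪ sem f
  | .star e => ↑(AddSubmonoid.closure (sem e))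

/-- Provable equality: the smallest congruence containing the axioms of
commutative Kleene algebra (where `e ≤ f` abbreviates `e ∪ f ≡ f`). -/
inductive CKA : CRE α → CRE α → Prop
  | refl (e : CRE α) : CKA e e
  | symm {e f : CRE α} : CKA e f → CKA f e
  | trans {e f g : CRE α} : CKA e f → CKA f g → CKA e g
  | mul_congr {e e' f f' : CRE α} : CKA e e' → CKA f f' → CKA (e.mul f) (e'.mul f')
  | union_congr {e e' f f' : CRE α} : CKA e e' → CKA f f' → CKA (e.union f) (e'.union f')
  | star_congr {e e' : CRE α} : CKA e e' → CKA e.star e'.star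
  | mul_assoc (e f g : CRE α) : CKA (e.mul (f.mul g)) ((e.mul f).mul g)
  | mul_comm (e f : CRE α) : CKA (e.mul f) (f.mul e)
  | one_mul (e : CRE α) : CKA (CRE.one.mul e) e
  | union_assoc (e f g : CRE α) : CKA (e.union (f.union g)) ((e.union f).union g)
  | union_comm (e f : CRE α) : CKA (e.union f) (f.union e)
  | union_idem (e : CRE α) : CKA (e.union e) e
  | zero_union (e : CRE α) : CKA (CRE.zero.union e) e
  | zero_mul (e : CRE α) : CKA (CRE.zero.mul e) CRE.zero
  | left_distrib (e f g : CRE α) : CKA (e.mul (f.union g)) ((e.mul f).union (e.mul g))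
  | star_unfold (e : CRE α) : CKA ((CRE.one.union (e.mul e.star)).union e.star) e.star
  | star_lfp {e f : CRE α} : CKA ((e.mul f).union f) f → CKA ((e.star.mul f).union f) f

/-- `e ≤ f`, i.e. `e ∪ f ≡ f`. -/
def leq (e f : CRE α) : Prop := CKA (e.union f) f

/-- `e^n`, the `n`-fold product of `e` with itself. -/
def pow (e : CRE α) : ℕ → CRE α
  | 0 => CRE.one
  | n + 1 => e.mul (pow e n)

/-- `e^{<n}`, i.e. `(e ∪ 1)^(n-1)` for `n > 0` and `0` for `n = 0`. -/
def ltPow (e : CRE α) : ℕ → CRE α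
  | 0 => CRE.zero
  | n + 1 => pow (e.union CRE.one) n

/-- Finite union of a list of expressions. -/
def unionList : List (CRE α) → CRE α
  | [] => CRE.zero
  | e :: l => e.union (unionList l)

/-- Finite product of a list of expressions. -/
def prodList : List (CRE α) → CRE α
  | [] => CRE.one
  | e :: l => e.mul (prodList l)

/-- `expr(u)`: the product over `a ∈ α` of `u a` copies of the letter `a`. -/
noncomputable def exprVec (u : α → ℕ) : CRE α :=
  prodList ((Finset.univ : Finset α).toList.map (fun a => pow (CRE.letter a) (u a)))

/-- The union `⋃_{b ∈ B} expr(b)` for a finite set of Parikh vectors `B`. -/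
noncomputable def unionVecs (B : Finset (α → ℕ)) : CRE α :=
  unionList (B.toList.map exprVec)

/-- The linear expression `expr(u) · (⋃_{b ∈ B} expr(b))*`. -/
noncomputable def linExpr (u : α → ℕ) (B : Finset (α → ℕ)) : CRE α :=
  (exprVec u).mul (unionVecs B).star

/-- A finite set of Parikh vectors is independent when every Parikh vector
admits at most one representation as an `ℕ`-linear combination of its elements. -/
def Independent (B : Finset (α → ℕ)) : Prop :=
  ∀ c d : (α → ℕ) → ℕ, (∑ b ∈ B, c b • b) = (∑ b ∈ B, d b • b) → ∀ b ∈ B, c b = d b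

/-- The semilinear expression associated to a list of linear data:
the finite union of the corresponding linear expressions. -/
noncomputable def semiLin (L : List ((α → ℕ) × Finset (α → ℕ))) : CRE α :=
  unionList (L.map (fun p => linExpr p.1 p.2))

/-- The dimension of a semilinear expression: the maximum of the dimensions
of its linear components. -/
def dimSL (L : List ((α → ℕ) × Finset (α → ℕ))) : ℕ :=
  (L.map (fun p => p.2.card)).foldr max 0

/-- Finitary (star-free) expressions. -/
def NoStar : CRE α → Prop
  | .zero => True
  | .one => True
  | .letter _ => True
  | .mul e f => NoStar e ∧ NoStar f
  | .union e f => NoStar e ∧ NoStar f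
  | .star _ => False

/-- Coordinatewise embedding of `ℕ^α` into `ℚ^α`. -/
def toQ (v : α → ℕ) : α → ℚ := fun a => (v a : ℚ)


set_option linter.unusedSectionVars false

/-! ### Basic CKA toolkit -/

local infix:50 " =k= " => CKA
local infix:50 " <=k " => leq

instance : @Trans (CRE α) (CRE α) (CRE α) CKA CKA CKA := ⟨CKA.trans⟩
instance : @Trans (CRE α) (CRE α) (CRE α) leq leq leq := ⟨fun h1 h2 => by
  unfold leq at *
  calc (_root_.CKAnote.CRE.union _ _) =k= _ := CKA.union_congr (CKA.refl _) h2.symm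
    _ =k= _ := CKA.union_assoc _ _ _
    _ =k= _ := CKA.union_congr h1 (CKA.refl _)
    _ =k= _ := h2⟩

theorem CKA.le_of_eq {e f : CRE α} (h : CKA e f) : leq e f :=
  (CKA.union_congr h (CKA.refl f)).trans (CKA.union_idem f)

theorem CKA.le_refl (e : CRE α) : leq e e := CKA.le_of_eq (CKA.refl e)

theorem CKA.le_trans {e f g : CRE α} (h1 : leq e f) (h2 : leq f g) : leq e g :=
  Trans.trans h1 h2

theorem CKA.le_antisymm {e f : CRE α} (h1 : leq e f) (h2 : leq f e) : CKA e f :=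
  CKA.trans (CKA.trans h2.symm (CKA.union_comm f e)) h1

instance : @Trans (CRE α) (CRE α) (CRE α) CKA leq leq :=
  ⟨fun h1 h2 => CKA.le_trans (CKA.le_of_eq h1) h2⟩
instance : @Trans (CRE α) (CRE α) (CRE α) leq CKA leq :=
  ⟨fun h1 h2 => CKA.le_trans h1 (CKA.le_of_eq h2)⟩

theorem CKA.le_union_left (e f : CRE α) : leq e (e.union f) := by
  unfold leq
  calc e.union (e.union f) =k= (e.union e).union f := CKA.union_assoc e e f
    _ =k= e.union f := CKA.union_congr (CKA.union_idem e) (CKA.refl f)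

theorem CKA.le_union_right (e f : CRE α) : leq f (e.union f) :=
  CKA.le_trans (CKA.le_union_left f e) (CKA.le_of_eq (CKA.union_comm f e))

theorem CKA.union_le {e f g : CRE α} (h1 : leq e g) (h2 : leq f g) : leq (e.union f) g := by
  unfold leq at *
  calc (e.union f).union g =k= e.union (f.union g) := (CKA.union_assoc e f g).symm
    _ =k= e.union g := CKA.union_congr (CKA.refl e) h2
    _ =k= g := h1

theorem CKA.union_le_union {e e' f f' : CRE α} (h1 : leq e e') (h2 : leq f f') :
    leq (e.union f) (e'.union f') :=
  CKA.union_le (CKA.le_trans h1 (CKA.le_union_left e' f'))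
    (CKA.le_trans h2 (CKA.le_union_right e' f'))

theorem CKA.mul_one (e : CRE α) : CKA (e.mul CRE.one) e :=
  (CKA.mul_comm e CRE.one).trans (CKA.one_mul e)

theorem CKA.mul_zero (e : CRE α) : CKA (e.mul CRE.zero) CRE.zero :=
  (CKA.mul_comm e CRE.zero).trans (CKA.zero_mul e)

theorem CKA.right_distrib (e f g : CRE α) :
    CKA ((e.union f).mul g) ((e.mul g).union (f.mul g)) :=
  ((CKA.mul_comm (e.union f) g).trans (CKA.left_distrib g e f)).trans
    (CKA.union_congr (CKA.mul_comm g e) (CKA.mul_comm g f))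

theorem CKA.mul_le_mul_left {f f' : CRE α} (e : CRE α) (h : leq f f') :
    leq (e.mul f) (e.mul f') := by
  unfold leq at *
  calc (e.mul f).union (e.mul f') =k= e.mul (f.union f') := (CKA.left_distrib e f f').symm
    _ =k= e.mul f' := CKA.mul_congr (CKA.refl e) h

theorem CKA.mul_le_mul_right {f f' : CRE α} (e : CRE α) (h : leq f f') :
    leq (f.mul e) (f'.mul e) := by
  calc f.mul e =k= e.mul f := CKA.mul_comm f e
    _ <=k e.mul f' := CKA.mul_le_mul_left e h
    _ =k= f'.mul e := CKA.mul_comm e f'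

theorem CKA.mul_le_mul {e e' f f' : CRE α} (h1 : leq e e') (h2 : leq f f') :
    leq (e.mul f) (e'.mul f') :=
  CKA.le_trans (CKA.mul_le_mul_left e h2) (CKA.mul_le_mul_right f' h1)

theorem CKA.le_congr {e e' f f' : CRE α} (he : CKA e e') (hf : CKA f f')
    (h : leq e f) : leq e' f' :=
  CKA.le_trans (CKA.le_of_eq he.symm) (CKA.le_trans h (CKA.le_of_eq hf))

/-! ### Star lemmas -/

theorem CKA.one_le_star (e : CRE α) : leq CRE.one e.star :=
  CKA.le_trans (CKA.le_union_left CRE.one (e.mul e.star))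
    (CKA.le_trans (CKA.le_union_left _ e.star) (CKA.le_of_eq (CKA.star_unfold e)))

theorem CKA.mul_star_le_star (e : CRE α) : leq (e.mul e.star) e.star :=
  CKA.le_trans (CKA.le_union_right CRE.one (e.mul e.star))
    (CKA.le_trans (CKA.le_union_left _ e.star) (CKA.le_of_eq (CKA.star_unfold e)))

theorem CKA.le_star (e : CRE α) : leq e e.star := by
  calc e =k= e.mul CRE.one := (CKA.mul_one e).symm
    _ <=k e.mul e.star := CKA.mul_le_mul_left e (CKA.one_le_star e)
    _ <=k e.star := CKA.mul_star_le_star e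

theorem CKA.star_le {e g : CRE α} (h1 : leq CRE.one g) (h2 : leq (e.mul g) g) :
    leq e.star g := by
  have h3 : leq (e.star.mul g) g := CKA.star_lfp h2
  calc e.star =k= e.star.mul CRE.one := (CKA.mul_one e.star).symm
    _ <=k e.star.mul g := CKA.mul_le_mul_left e.star h1
    _ <=k g := h3

theorem CKA.star_mul_star (e : CRE α) : CKA (e.star.mul e.star) e.star := by
  apply CKA.le_antisymm
  · exact CKA.star_lfp (CKA.mul_star_le_star e)
  · calc e.star =k= CRE.one.mul e.star := (CKA.one_mul e.star).symm
      _ <=k e.star.mul e.star := CKA.mul_le_mul_right e.star (CKA.one_le_star e)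

theorem CKA.star_mono {e f : CRE α} (h : leq e f) : leq e.star f.star := by
  apply CKA.star_le (CKA.one_le_star f)
  calc e.mul f.star <=k f.mul f.star := CKA.mul_le_mul_right f.star h
    _ <=k f.star := CKA.mul_star_le_star f

theorem CKA.star_le_star {e f : CRE α} (h : leq e f.star) : leq e.star f.star := by
  apply CKA.star_le (CKA.one_le_star f)
  calc e.mul f.star <=k f.star.mul f.star := CKA.mul_le_mul_right f.star h
    _ =k= f.star := CKA.star_mul_star f

theorem CKA.star_star (e : CRE α) : CKA e.star.star e.star :=
  CKA.le_antisymm (CKA.star_le_star (CKA.le_refl e.star)) (CKA.le_star e.star)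

theorem CKA.star_one : CKA (CRE.one.star : CRE α) CRE.one :=
  CKA.le_antisymm
    (CKA.star_le (CKA.le_refl CRE.one) (CKA.le_of_eq (CKA.one_mul CRE.one)))
    (CKA.one_le_star CRE.one)

theorem CKA.star_zero : CKA (CRE.zero.star : CRE α) CRE.one :=
  CKA.le_antisymm
    (CKA.star_le (CKA.le_refl CRE.one)
      (CKA.le_trans (CKA.le_of_eq (CKA.zero_mul CRE.one))
        (CKA.le_trans (CKA.le_union_left _ _) (CKA.le_of_eq (CKA.zero_union CRE.one)))))
    (CKA.one_le_star CRE.zero)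

theorem CKA.star_union (e f : CRE α) : CKA ((e.union f).star) (e.star.mul f.star) := by
  apply CKA.le_antisymm
  · apply CKA.star_le
    · calc CRE.one =k= CRE.one.mul CRE.one := (CKA.one_mul CRE.one).symm
        _ <=k e.star.mul f.star := CKA.mul_le_mul (CKA.one_le_star e) (CKA.one_le_star f)
    · apply CKA.le_congr (CKA.right_distrib e f (e.star.mul f.star)).symm (CKA.refl _)
      apply CKA.union_le
      · calc e.mul (e.star.mul f.star) =k= (e.mul e.star).mul f.star :=
              CKA.mul_assoc e e.star f.star
          _ <=k e.star.mul f.star := CKA.mul_le_mul_right f.star (CKA.mul_star_le_star e)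
      · calc f.mul (e.star.mul f.star) =k= (f.mul e.star).mul f.star :=
              CKA.mul_assoc f e.star f.star
          _ =k= (e.star.mul f).mul f.star :=
              CKA.mul_congr (CKA.mul_comm f e.star) (CKA.refl f.star)
          _ =k= e.star.mul (f.mul f.star) := (CKA.mul_assoc e.star f f.star).symm
          _ <=k e.star.mul f.star := CKA.mul_le_mul_left e.star (CKA.mul_star_le_star f)
  · calc e.star.mul f.star <=k (e.union f).star.mul (e.union f).star :=
        CKA.mul_le_mul (CKA.star_mono (CKA.le_union_left e f))
          (CKA.star_mono (CKA.le_union_right e f))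
      _ =k= (e.union f).star := CKA.star_mul_star (e.union f)

/-! ### Powers, list unions and products -/

theorem CKA.mul_mul_mul_comm (a b c d : CRE α) :
    CKA ((a.mul b).mul (c.mul d)) ((a.mul c).mul (b.mul d)) := by
  calc (a.mul b).mul (c.mul d) =k= a.mul (b.mul (c.mul d)) := (CKA.mul_assoc _ _ _).symm
    _ =k= a.mul ((b.mul c).mul d) := CKA.mul_congr (CKA.refl a) (CKA.mul_assoc _ _ _)
    _ =k= a.mul ((c.mul b).mul d) :=
        CKA.mul_congr (CKA.refl a) (CKA.mul_congr (CKA.mul_comm b c) (CKA.refl d))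
    _ =k= a.mul (c.mul (b.mul d)) := CKA.mul_congr (CKA.refl a) (CKA.mul_assoc _ _ _).symm
    _ =k= (a.mul c).mul (b.mul d) := CKA.mul_assoc _ _ _

theorem CKA.pow_congr {e f : CRE α} (h : CKA e f) (n : ℕ) : CKA (pow e n) (pow f n) := by
  induction n with
  | zero => exact CKA.refl _
  | succ n ih => exact CKA.mul_congr h ih

theorem CKA.pow_add (e : CRE α) (m n : ℕ) :
    CKA (pow e (m + n)) ((pow e m).mul (pow e n)) := by
  induction m with
  | zero => simpa [pow, Nat.zero_add] using (CKA.one_mul (pow e n)).symm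
  | succ m ih =>
    have h : m + 1 + n = (m + n) + 1 := by omega
    rw [h]
    simp only [pow]
    calc e.mul (pow e (m + n)) =k= e.mul ((pow e m).mul (pow e n)) :=
          CKA.mul_congr (CKA.refl e) ih
      _ =k= (e.mul (pow e m)).mul (pow e n) := CKA.mul_assoc _ _ _

theorem CKA.pow_le_star {e u : CRE α} (h : leq e u.star) (n : ℕ) :
    leq (pow e n) u.star := by
  induction n with
  | zero => exact CKA.one_le_star u
  | succ n ih =>
    calc pow e (n+1) <=k u.star.mul u.star := CKA.mul_le_mul h ih
      _ =k= u.star := CKA.star_mul_star u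

theorem CKA.le_unionList {l : List (CRE α)} {e : CRE α} (h : e ∈ l) :
    leq e (unionList l) := by
  induction l with
  | nil => cases h
  | cons x l ih =>
    rcases List.mem_cons.1 h with h | h
    · subst h; exact CKA.le_union_left _ _
    · exact CKA.le_trans (ih h) (CKA.le_union_right _ _)

theorem CKA.unionList_le {l : List (CRE α)} {g : CRE α} (h : ∀ e ∈ l, leq e g) :
    leq (unionList l) g := by
  induction l with
  | nil => exact CKA.zero_union g
  | cons x l ih =>
    exact CKA.union_le (h x (List.mem_cons_self (a := x) (l := l))) (ih fun e he => h e (List.mem_cons_of_mem x he))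

theorem CKA.unionList_subset_le {l1 l2 : List (CRE α)} (h : ∀ e ∈ l1, e ∈ l2) :
    leq (unionList l1) (unionList l2) :=
  CKA.unionList_le fun e he => CKA.le_unionList (h e he)

theorem CKA.unionList_append (l1 l2 : List (CRE α)) :
    CKA (unionList (l1 ++ l2)) ((unionList l1).union (unionList l2)) := by
  induction l1 with
  | nil => exact (CKA.zero_union (unionList l2)).symm
  | cons x l ih =>
    calc x.union (unionList (l ++ l2)) =k= x.union ((unionList l).union (unionList l2)) :=
          CKA.union_congr (CKA.refl x) ih
      _ =k= (x.union (unionList l)).union (unionList l2) := CKA.union_assoc _ _ _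

theorem CKA.unionList_map_congr {β : Type*} {l : List β} {f g : β → CRE α}
    (h : ∀ x ∈ l, CKA (f x) (g x)) :
    CKA (unionList (l.map f)) (unionList (l.map g)) := by
  induction l with
  | nil => exact CKA.refl _
  | cons x l ih =>
    exact CKA.union_congr (h x (List.mem_cons_self (a := x) (l := l)))
      (ih fun y hy => h y (List.mem_cons_of_mem x hy))

theorem CKA.mul_unionList (e : CRE α) (l : List (CRE α)) :
    CKA (e.mul (unionList l)) (unionList (l.map (fun x => e.mul x))) := by
  induction l with
  | nil => exact CKA.mul_zero e
  | cons x l ih =>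
    calc e.mul (x.union (unionList l)) =k= (e.mul x).union (e.mul (unionList l)) :=
          CKA.left_distrib e x (unionList l)
      _ =k= (e.mul x).union (unionList (l.map (fun y => e.mul y))) :=
          CKA.union_congr (CKA.refl _) ih

theorem CKA.unionList_mul (e : CRE α) (l : List (CRE α)) :
    CKA ((unionList l).mul e) (unionList (l.map (fun x => x.mul e))) := by
  calc (unionList l).mul e =k= e.mul (unionList l) := CKA.mul_comm _ _
    _ =k= unionList (l.map (fun x => e.mul x)) := CKA.mul_unionList e l
    _ =k= unionList (l.map (fun x => x.mul e)) :=
        CKA.unionList_map_congr fun x _ => CKA.mul_comm e x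

theorem CKA.prodList_one {β : Type*} {l : List β} {f : β → CRE α}
    (h : ∀ x ∈ l, CKA (f x) CRE.one) :
    CKA (prodList (l.map f)) CRE.one := by
  induction l with
  | nil => exact CKA.refl _
  | cons x l ih =>
    calc (f x).mul (prodList (l.map f)) =k= CRE.one.mul CRE.one :=
          CKA.mul_congr (h x (List.mem_cons_self (a := x) (l := l)))
            (ih fun y hy => h y (List.mem_cons_of_mem x hy))
      _ =k= CRE.one := CKA.one_mul CRE.one

theorem CKA.prodList_map_congr {β : Type*} {l : List β} {f g : β → CRE α}
    (h : ∀ x ∈ l, CKA (f x) (g x)) :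
    CKA (prodList (l.map f)) (prodList (l.map g)) := by
  induction l with
  | nil => exact CKA.refl _
  | cons x l ih =>
    exact CKA.mul_congr (h x (List.mem_cons_self (a := x) (l := l)))
      (ih fun y hy => h y (List.mem_cons_of_mem x hy))

theorem CKA.prodList_mul_prodList {β : Type*} (l : List β) (f g : β → CRE α) :
    CKA ((prodList (l.map f)).mul (prodList (l.map g)))
      (prodList (l.map (fun x => (f x).mul (g x)))) := by
  induction l with
  | nil => exact CKA.one_mul CRE.one
  | cons x l ih =>
    calc ((f x).mul (prodList (l.map f))).mul ((g x).mul (prodList (l.map g)))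
        =k= ((f x).mul (g x)).mul ((prodList (l.map f)).mul (prodList (l.map g))) :=
          CKA.mul_mul_mul_comm _ _ _ _
      _ =k= ((f x).mul (g x)).mul (prodList (l.map (fun y => (f y).mul (g y)))) :=
          CKA.mul_congr (CKA.refl _) ih

/-! ### exprVec lemmas -/

theorem CKA.exprVec_add (u v : α → ℕ) :
    CKA (exprVec (u + v)) ((exprVec u).mul (exprVec v)) := by
  unfold exprVec
  calc prodList (Finset.univ.toList.map (fun a => pow (CRE.letter a) ((u + v) a)))
      =k= prodList (Finset.univ.toList.map
            (fun a => (pow (CRE.letter a) (u a)).mul (pow (CRE.letter a) (v a)))) := by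
        apply CKA.prodList_map_congr
        intro a _
        exact CKA.pow_add (CRE.letter a) (u a) (v a)
    _ =k= (prodList (Finset.univ.toList.map (fun a => pow (CRE.letter a) (u a)))).mul
            (prodList (Finset.univ.toList.map (fun a => pow (CRE.letter a) (v a)))) :=
        (CKA.prodList_mul_prodList _ _ _).symm

theorem CKA.exprVec_zero : CKA (exprVec (0 : α → ℕ)) CRE.one := by
  unfold exprVec
  exact CKA.prodList_one fun a _ => CKA.refl CRE.one

theorem CKA.exprVec_smul (n : ℕ) (u : α → ℕ) :
    CKA (exprVec (n • u)) (pow (exprVec u) n) := by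
  induction n with
  | zero => rw [zero_smul]; exact CKA.exprVec_zero
  | succ n ih =>
    rw [succ_nsmul']
    calc exprVec (u + n • u) =k= (exprVec u).mul (exprVec (n • u)) := CKA.exprVec_add _ _
      _ =k= (exprVec u).mul (pow (exprVec u) n) := CKA.mul_congr (CKA.refl _) ih

theorem CKA.prodList_single {l : List α} {f : α → CRE α} {a : α}
    (hnd : l.Nodup) (ha : a ∈ l) (h : ∀ x ∈ l, x ≠ a → CKA (f x) CRE.one) :
    CKA (prodList (l.map f)) (f a) := by
  induction l with
  | nil => cases ha
  | cons x l ih =>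
    rcases List.mem_cons.1 ha with rfl | ha'
    · have : CKA (prodList (l.map f)) CRE.one := by
        apply CKA.prodList_one
        intro y hy
        exact h y (List.mem_cons_of_mem a hy) (fun hya => (List.nodup_cons.1 hnd).1 (hya ▸ hy))
      calc (f a).mul (prodList (l.map f)) =k= (f a).mul CRE.one :=
            CKA.mul_congr (CKA.refl _) this
        _ =k= f a := CKA.mul_one (f a)
    · have hx : x ≠ a := fun hxa => (List.nodup_cons.1 hnd).1 (hxa ▸ ha')
      calc (f x).mul (prodList (l.map f)) =k= CRE.one.mul (f a) :=
            CKA.mul_congr (h x (List.mem_cons_self (a := x) (l := l)) hx)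
              (ih (List.nodup_cons.1 hnd).2 ha'
                (fun y hy => h y (List.mem_cons_of_mem x hy)))
        _ =k= f a := CKA.one_mul (f a)

theorem CKA.exprVec_single (a : α) : CKA (exprVec (Pi.single a 1)) (CRE.letter a) := by
  unfold exprVec
  have h1 : CKA (prodList (Finset.univ.toList.map
      (fun x => pow (CRE.letter x) ((Pi.single a 1 : α → ℕ) x)))) (pow (CRE.letter a) ((Pi.single a 1 : α → ℕ) a)) := by
    apply CKA.prodList_single (Finset.nodup_toList _) (Finset.mem_toList.2 (Finset.mem_univ a))
    intro x _ hx
    rw [Pi.single_eq_of_ne hx]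
    exact CKA.refl _
  calc prodList (Finset.univ.toList.map (fun x => pow (CRE.letter x) ((Pi.single a 1 : α → ℕ) x)))
      =k= pow (CRE.letter a) ((Pi.single a 1 : α → ℕ) a) := h1
    _ =k= (CRE.letter a).mul CRE.one := by rw [Pi.single_eq_same]; exact CKA.refl _
    _ =k= CRE.letter a := CKA.mul_one _

/-! ### unionVecs and linExpr lemmas -/

theorem CKA.le_unionVecs {v : α → ℕ} {B : Finset (α → ℕ)} (h : v ∈ B) :
    leq (exprVec v) (unionVecs B) :=
  CKA.le_unionList (List.mem_map.2 ⟨v, Finset.mem_toList.2 h, rfl⟩)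

theorem CKA.unionVecs_le {B : Finset (α → ℕ)} {g : CRE α}
    (h : ∀ v ∈ B, leq (exprVec v) g) : leq (unionVecs B) g := by
  apply CKA.unionList_le
  intro e he
  rcases List.mem_map.1 he with ⟨v, hv, rfl⟩
  exact h v (Finset.mem_toList.1 hv)

theorem CKA.unionVecs_subset {A B : Finset (α → ℕ)} (h : A ⊆ B) :
    leq (unionVecs A) (unionVecs B) :=
  CKA.unionVecs_le fun v hv => CKA.le_unionVecs (h hv)

theorem CKA.unionVecs_union (A B : Finset (α → ℕ)) :
    CKA (unionVecs (A ∪ B)) ((unionVecs A).union (unionVecs B)) := by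
  apply CKA.le_antisymm
  · apply CKA.unionVecs_le
    intro v hv
    rcases Finset.mem_union.1 hv with hv | hv
    · exact CKA.le_trans (CKA.le_unionVecs hv) (CKA.le_union_left _ _)
    · exact CKA.le_trans (CKA.le_unionVecs hv) (CKA.le_union_right _ _)
  · exact CKA.union_le (CKA.unionVecs_subset Finset.subset_union_left)
      (CKA.unionVecs_subset Finset.subset_union_right)

theorem CKA.unionVecs_insert (v : α → ℕ) (A : Finset (α → ℕ)) :
    CKA (unionVecs (insert v A)) ((exprVec v).union (unionVecs A)) := by
  apply CKA.le_antisymm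
  · apply CKA.unionVecs_le
    intro w hw
    rcases Finset.mem_insert.1 hw with rfl | hw
    · exact CKA.le_union_left _ _
    · exact CKA.le_trans (CKA.le_unionVecs hw) (CKA.le_union_right _ _)
  · exact CKA.union_le (CKA.le_unionVecs (Finset.mem_insert_self v A))
      (CKA.unionVecs_subset (Finset.subset_insert v A))

theorem CKA.unionVecs_empty : CKA (unionVecs (∅ : Finset (α → ℕ))) CRE.zero := by
  unfold unionVecs
  rw [Finset.toList_empty]
  exact CKA.refl _

theorem CKA.linExpr_mul (u v : α → ℕ) (A B : Finset (α → ℕ)) :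
    CKA ((linExpr u A).mul (linExpr v B)) (linExpr (u + v) (A ∪ B)) := by
  unfold linExpr
  calc ((exprVec u).mul (unionVecs A).star).mul ((exprVec v).mul (unionVecs B).star)
      =k= ((exprVec u).mul (exprVec v)).mul ((unionVecs A).star.mul (unionVecs B).star) :=
        CKA.mul_mul_mul_comm _ _ _ _
    _ =k= (exprVec (u + v)).mul (((unionVecs A).union (unionVecs B)).star) :=
        CKA.mul_congr (CKA.exprVec_add u v).symm (CKA.star_union _ _).symm
    _ =k= (exprVec (u + v)).mul ((unionVecs (A ∪ B)).star) :=
        CKA.mul_congr (CKA.refl _) (CKA.star_congr (CKA.unionVecs_union A B).symm)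

/-! ### Semilinear normal form -/

theorem CKA.union_zero (e : CRE α) : CKA (e.union CRE.zero) e :=
  (CKA.union_comm e CRE.zero).trans (CKA.zero_union e)

theorem CKA.mul_le_star {a b g : CRE α} (ha : leq a g.star) (hb : leq b g.star) :
    leq (a.mul b) g.star :=
  CKA.le_trans (CKA.mul_le_mul ha hb) (CKA.le_of_eq (CKA.star_mul_star g))

theorem CKA.denest (e f : CRE α) :
    CKA ((e.union f).star) (f.star.mul (e.mul f.star).star) := by
  apply CKA.le_antisymm
  · apply CKA.star_le
    · calc CRE.one =k= CRE.one.mul CRE.one := (CKA.one_mul _).symm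
        _ <=k f.star.mul (e.mul f.star).star :=
          CKA.mul_le_mul (CKA.one_le_star f) (CKA.one_le_star _)
    · apply CKA.le_congr (CKA.right_distrib e f _).symm (CKA.refl _)
      apply CKA.union_le
      · calc e.mul (f.star.mul (e.mul f.star).star)
            =k= (e.mul f.star).mul (e.mul f.star).star := CKA.mul_assoc _ _ _
          _ <=k (e.mul f.star).star := CKA.mul_star_le_star _
          _ =k= CRE.one.mul (e.mul f.star).star := (CKA.one_mul _).symm
          _ <=k f.star.mul (e.mul f.star).star :=
            CKA.mul_le_mul_right _ (CKA.one_le_star f)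
      · calc f.mul (f.star.mul (e.mul f.star).star)
            =k= (f.mul f.star).mul (e.mul f.star).star := CKA.mul_assoc _ _ _
          _ <=k f.star.mul (e.mul f.star).star :=
            CKA.mul_le_mul_right _ (CKA.mul_star_le_star f)
  · have hf : leq f.star (e.union f).star := CKA.star_mono (CKA.le_union_right e f)
    have he : leq (e.mul f.star) (e.union f).star :=
      CKA.mul_le_star (CKA.le_trans (CKA.le_union_left e f) (CKA.le_star _)) hf
    exact CKA.mul_le_star hf (CKA.star_le_star he)

theorem CKA.slide (e f : CRE α) :
    CKA ((e.mul f.star).star) (CRE.one.union (e.mul (e.union f).star)) := by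
  apply CKA.le_antisymm
  · apply CKA.star_le
    · exact CKA.le_union_left _ _
    · apply CKA.le_congr (CKA.left_distrib (e.mul f.star) CRE.one _).symm (CKA.refl _)
      apply CKA.union_le
      · calc (e.mul f.star).mul CRE.one =k= e.mul f.star := CKA.mul_one _
          _ <=k e.mul (e.union f).star :=
            CKA.mul_le_mul_left e (CKA.star_mono (CKA.le_union_right e f))
          _ <=k CRE.one.union (e.mul (e.union f).star) := CKA.le_union_right _ _
      · calc (e.mul f.star).mul (e.mul (e.union f).star)
            =k= e.mul (f.star.mul (e.mul (e.union f).star)) := (CKA.mul_assoc _ _ _).symm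
          _ <=k e.mul (e.union f).star := by
            apply CKA.mul_le_mul_left e
            exact CKA.mul_le_star (CKA.star_mono (CKA.le_union_right e f))
              (CKA.mul_le_star (CKA.le_trans (CKA.le_union_left e f) (CKA.le_star _))
                (CKA.le_refl _))
          _ <=k CRE.one.union (e.mul (e.union f).star) := CKA.le_union_right _ _
  · apply CKA.union_le
    · exact CKA.one_le_star _
    · calc e.mul (e.union f).star
          =k= e.mul (f.star.mul (e.mul f.star).star) :=
            CKA.mul_congr (CKA.refl e) (CKA.denest e f)
        _ =k= (e.mul f.star).mul (e.mul f.star).star := CKA.mul_assoc _ _ _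
        _ <=k (e.mul f.star).star := CKA.mul_star_le_star _

theorem CKA.linExpr_empty (u : α → ℕ) : CKA (linExpr u ∅) (exprVec u) := by
  unfold linExpr
  calc (exprVec u).mul (unionVecs ∅).star
      =k= (exprVec u).mul CRE.one :=
        CKA.mul_congr (CKA.refl _) ((CKA.star_congr CKA.unionVecs_empty).trans CKA.star_zero)
    _ =k= exprVec u := CKA.mul_one _

theorem CKA.linExpr_zero_empty : CKA (linExpr (0 : α → ℕ) ∅) CRE.one :=
  (CKA.linExpr_empty 0).trans CKA.exprVec_zero

theorem CKA.semiLin_single (p : (α → ℕ) × Finset (α → ℕ)) :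
    CKA (semiLin [p]) (linExpr p.1 p.2) := CKA.union_zero _

theorem CKA.semiLin_append (L1 L2 : List ((α → ℕ) × Finset (α → ℕ))) :
    CKA (semiLin (L1 ++ L2)) ((semiLin L1).union (semiLin L2)) := by
  unfold semiLin
  rw [List.map_append]
  exact CKA.unionList_append _ _

theorem CKA.linExpr_mul_semiLin (u : α → ℕ) (A : Finset (α → ℕ))
    (L : List ((α → ℕ) × Finset (α → ℕ))) :
    CKA ((linExpr u A).mul (semiLin L))
      (semiLin (L.map (fun q => (u + q.1, A ∪ q.2)))) := by
  induction L with
  | nil => exact CKA.mul_zero _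
  | cons q L ih =>
    calc (linExpr u A).mul ((linExpr q.1 q.2).union (semiLin L))
        =k= ((linExpr u A).mul (linExpr q.1 q.2)).union ((linExpr u A).mul (semiLin L)) :=
          CKA.left_distrib _ _ _
      _ =k= (linExpr (u + q.1) (A ∪ q.2)).union
            (semiLin (L.map (fun r => (u + r.1, A ∪ r.2)))) :=
          CKA.union_congr (CKA.linExpr_mul u q.1 A q.2) ih

noncomputable def mulSL (L1 L2 : List ((α → ℕ) × Finset (α → ℕ))) :
    List ((α → ℕ) × Finset (α → ℕ)) :=
  L1.flatMap (fun p => L2.map (fun q => (p.1 + q.1, p.2 ∪ q.2)))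

theorem CKA.semiLin_mul (L1 L2 : List ((α → ℕ) × Finset (α → ℕ))) :
    CKA ((semiLin L1).mul (semiLin L2)) (semiLin (mulSL L1 L2)) := by
  induction L1 with
  | nil => exact CKA.zero_mul _
  | cons p L1 ih =>
    calc ((linExpr p.1 p.2).union (semiLin L1)).mul (semiLin L2)
        =k= ((linExpr p.1 p.2).mul (semiLin L2)).union ((semiLin L1).mul (semiLin L2)) :=
          CKA.right_distrib _ _ _
      _ =k= (semiLin (L2.map (fun q => (p.1 + q.1, p.2 ∪ q.2)))).union
            (semiLin (mulSL L1 L2)) :=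
          CKA.union_congr (CKA.linExpr_mul_semiLin p.1 p.2 L2) ih
      _ =k= semiLin (L2.map (fun q => (p.1 + q.1, p.2 ∪ q.2)) ++ mulSL L1 L2) :=
          (CKA.semiLin_append _ _).symm
      _ =k= semiLin (mulSL (p :: L1) L2) := CKA.refl _

theorem CKA.linExpr_star (u : α → ℕ) (A : Finset (α → ℕ)) :
    CKA ((linExpr u A).star) (CRE.one.union (linExpr u (insert u A))) := by
  unfold linExpr
  calc ((exprVec u).mul (unionVecs A).star).star
      =k= CRE.one.union ((exprVec u).mul ((exprVec u).union (unionVecs A)).star) :=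
        CKA.slide _ _
    _ =k= CRE.one.union ((exprVec u).mul (unionVecs (insert u A)).star) :=
        CKA.union_congr (CKA.refl _)
          (CKA.mul_congr (CKA.refl _) (CKA.star_congr (CKA.unionVecs_insert u A).symm))

noncomputable def starSL : List ((α → ℕ) × Finset (α → ℕ)) → List ((α → ℕ) × Finset (α → ℕ))
  | [] => [(0, ∅)]
  | p :: L => starSL L ++ (starSL L).map (fun q => (p.1 + q.1, insert p.1 p.2 ∪ q.2))

theorem CKA.semiLin_star (L : List ((α → ℕ) × Finset (α → ℕ))) :
    CKA ((semiLin L).star) (semiLin (starSL L)) := by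
  induction L with
  | nil =>
    calc (semiLin ([] : List ((α → ℕ) × Finset (α → ℕ)))).star
        =k= CRE.one := CKA.star_zero
      _ =k= linExpr (0 : α → ℕ) ∅ := CKA.linExpr_zero_empty.symm
      _ =k= semiLin [((0 : α → ℕ), (∅ : Finset (α → ℕ)))] := (CKA.semiLin_single ((0 : α → ℕ), (∅ : Finset (α → ℕ)))).symm
  | cons p L ih =>
    calc ((linExpr p.1 p.2).union (semiLin L)).star
        =k= (linExpr p.1 p.2).star.mul (semiLin L).star := CKA.star_union _ _
      _ =k= (CRE.one.union (linExpr p.1 (insert p.1 p.2))).mul (semiLin (starSL L)) :=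
          CKA.mul_congr (CKA.linExpr_star p.1 p.2) ih
      _ =k= (CRE.one.mul (semiLin (starSL L))).union
            ((linExpr p.1 (insert p.1 p.2)).mul (semiLin (starSL L))) :=
          CKA.right_distrib _ _ _
      _ =k= (semiLin (starSL L)).union
            (semiLin ((starSL L).map (fun q => (p.1 + q.1, insert p.1 p.2 ∪ q.2)))) :=
          CKA.union_congr (CKA.one_mul _) (CKA.linExpr_mul_semiLin _ _ _)
      _ =k= semiLin (starSL (p :: L)) := (CKA.semiLin_append _ _).symm

theorem CKA.toSemiLin (e : CRE α) : ∃ L, CKA e (semiLin L) := by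
  induction e with
  | zero => exact ⟨[], CKA.refl _⟩
  | one => exact ⟨[((0 : α → ℕ), ∅)],
      (CKA.linExpr_zero_empty.symm).trans (CKA.semiLin_single ((0 : α → ℕ), (∅ : Finset (α → ℕ)))).symm⟩
  | letter a =>
    refine ⟨[((Pi.single a 1 : α → ℕ), ∅)], ?_⟩
    calc CRE.letter a =k= exprVec (Pi.single a 1) := (CKA.exprVec_single a).symm
      _ =k= linExpr (Pi.single a 1) ∅ := (CKA.linExpr_empty _).symm
      _ =k= semiLin [((Pi.single a 1 : α → ℕ), ∅)] := (CKA.semiLin_single ((Pi.single a 1 : α → ℕ), (∅ : Finset (α → ℕ)))).symm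
  | mul e f ihe ihf =>
    rcases ihe with ⟨L1, h1⟩
    rcases ihf with ⟨L2, h2⟩
    exact ⟨mulSL L1 L2, (CKA.mul_congr h1 h2).trans (CKA.semiLin_mul L1 L2)⟩
  | union e f ihe ihf =>
    rcases ihe with ⟨L1, h1⟩
    rcases ihf with ⟨L2, h2⟩
    exact ⟨L1 ++ L2, (CKA.union_congr h1 h2).trans (CKA.semiLin_append L1 L2).symm⟩
  | star e ihe =>
    rcases ihe with ⟨L, h⟩
    exact ⟨starSL L, (CKA.star_congr h).trans (CKA.semiLin_star L)⟩

/-! ### Bounded powers -/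

def lowPow (e : CRE α) (n : ℕ) : CRE α := unionList ((List.range n).map (pow e))

theorem CKA.mul_left_comm (a b c : CRE α) :
    CKA (a.mul (b.mul c)) (b.mul (a.mul c)) := by
  calc a.mul (b.mul c) =k= (a.mul b).mul c := CKA.mul_assoc _ _ _
    _ =k= (b.mul a).mul c := CKA.mul_congr (CKA.mul_comm a b) (CKA.refl c)
    _ =k= b.mul (a.mul c) := (CKA.mul_assoc _ _ _).symm

theorem CKA.mul_assoc4 (a b c d : CRE α) :
    CKA (a.mul ((b.mul c).mul d)) ((a.mul b).mul (c.mul d)) := by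
  calc a.mul ((b.mul c).mul d) =k= a.mul (b.mul (c.mul d)) :=
      CKA.mul_congr (CKA.refl a) (CKA.mul_assoc _ _ _).symm
    _ =k= (a.mul b).mul (c.mul d) := CKA.mul_assoc _ _ _

theorem CKA.star_unfold_eq (e : CRE α) :
    CKA e.star (CRE.one.union (e.mul e.star)) := by
  apply CKA.le_antisymm
  · apply CKA.star_le
    · exact CKA.le_union_left _ _
    · apply CKA.le_congr (CKA.left_distrib e CRE.one (e.mul e.star)).symm (CKA.refl _)
      apply CKA.union_le
      · calc e.mul CRE.one <=k e.mul e.star := CKA.mul_le_mul_left e (CKA.one_le_star e)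
          _ <=k CRE.one.union (e.mul e.star) := CKA.le_union_right _ _
      · calc e.mul (e.mul e.star) <=k e.mul e.star :=
            CKA.mul_le_mul_left e (CKA.mul_star_le_star e)
          _ <=k CRE.one.union (e.mul e.star) := CKA.le_union_right _ _
  · exact CKA.le_trans (CKA.le_union_left _ e.star) (CKA.le_of_eq (CKA.star_unfold e))

theorem CKA.lowPow_succ (e : CRE α) (n : ℕ) :
    CKA (lowPow e (n + 1)) ((lowPow e n).union (pow e n)) := by
  unfold lowPow
  rw [List.range_succ, List.map_append]
  calc unionList (((List.range n).map (pow e)) ++ [pow e n])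
      =k= (unionList ((List.range n).map (pow e))).union (unionList [pow e n]) :=
        CKA.unionList_append _ _
    _ =k= (unionList ((List.range n).map (pow e))).union (pow e n) :=
        CKA.union_congr (CKA.refl _) (CKA.union_zero _)

theorem CKA.star_split (e : CRE α) (n : ℕ) :
    CKA e.star ((lowPow e n).union ((pow e n).mul e.star)) := by
  induction n with
  | zero => exact ((CKA.zero_union _).trans (CKA.one_mul _)).symm
  | succ n ih =>
    calc e.star =k= (lowPow e n).union ((pow e n).mul e.star) := ih
      _ =k= (lowPow e n).union ((pow e n).mul (CRE.one.union (e.mul e.star))) :=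
        CKA.union_congr (CKA.refl _) (CKA.mul_congr (CKA.refl _) (CKA.star_unfold_eq e))
      _ =k= (lowPow e n).union (((pow e n).mul CRE.one).union ((pow e n).mul (e.mul e.star))) :=
        CKA.union_congr (CKA.refl _) (CKA.left_distrib _ _ _)
      _ =k= (lowPow e n).union ((pow e n).union ((pow e (n+1)).mul e.star)) := by
        apply CKA.union_congr (CKA.refl _)
        apply CKA.union_congr (CKA.mul_one _)
        calc (pow e n).mul (e.mul e.star) =k= e.mul ((pow e n).mul e.star) :=
            CKA.mul_left_comm _ _ _
          _ =k= (e.mul (pow e n)).mul e.star := CKA.mul_assoc _ _ _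
      _ =k= ((lowPow e n).union (pow e n)).union ((pow e (n+1)).mul e.star) :=
        CKA.union_assoc _ _ _
      _ =k= (lowPow e (n+1)).union ((pow e (n+1)).mul e.star) :=
        CKA.union_congr (CKA.lowPow_succ e n).symm (CKA.refl _)

theorem CKA.one_le_lowPow {e : CRE α} {n : ℕ} (h : 0 < n) : leq CRE.one (lowPow e n) :=
  CKA.le_unionList (List.mem_map.2 ⟨0, List.mem_range.2 h, rfl⟩)

theorem CKA.lowPow_le_star {e u : CRE α} (h : leq e u.star) (n : ℕ) :
    leq (lowPow e n) u.star := by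
  apply CKA.unionList_le
  intro g hg
  rcases List.mem_map.1 hg with ⟨i, _, rfl⟩
  exact CKA.pow_le_star h i

theorem CKA.mul_lowPow_le (e : CRE α) (n : ℕ) :
    leq (e.mul (lowPow e n)) ((lowPow e n).union (pow e n)) := by
  apply CKA.le_congr (CKA.mul_unionList e _).symm (CKA.refl _)
  apply CKA.unionList_le
  intro g hg
  rcases List.mem_map.1 hg with ⟨h, hh, rfl⟩
  rcases List.mem_map.1 hh with ⟨i, hi, rfl⟩
  have hi' : i < n := List.mem_range.1 hi
  show leq (pow e (i+1)) _
  rcases Nat.lt_or_ge (i+1) n with h1 | h1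
  · exact CKA.le_trans (CKA.le_unionList (List.mem_map.2 ⟨i+1, List.mem_range.2 h1, rfl⟩))
      (CKA.le_union_left _ _)
  · have : i + 1 = n := by omega
    rw [this]
    exact CKA.le_union_right _ _

theorem CKA.exprVec_comb (x y : α → ℕ) (q p : ℕ) :
    CKA (exprVec (q • x + p • y)) ((pow (exprVec x) q).mul (pow (exprVec y) p)) :=
  (CKA.exprVec_add _ _).trans (CKA.mul_congr (CKA.exprVec_smul q x) (CKA.exprVec_smul p y))

/-! ### The splitting identity -/

theorem CKA.caseX {x y : α → ℕ} {C : Finset (α → ℕ)} (hy : y ∈ C.erase x)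
    (hxc : x ∈ C.erase y) {p q : ℕ} (hp : 0 < p) (hq : 0 < q) :
    leq ((exprVec x).mul
        (((lowPow (exprVec x) q).mul (unionVecs (C.erase x)).star).union
         ((lowPow (exprVec y) p).mul (unionVecs (C.erase y)).star)))
      ((exprVec (q • x + p • y)).star.mul
        (((lowPow (exprVec x) q).mul (unionVecs (C.erase x)).star).union
         ((lowPow (exprVec y) p).mul (unionVecs (C.erase y)).star))) := by
  set Ex := exprVec x with hEx
  set Ey := exprVec y with hEy
  set SX := (unionVecs (C.erase x)).star with hSX
  set SY := (unionVecs (C.erase y)).star with hSY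
  set Z := exprVec (q • x + p • y) with hZ
  set A := (lowPow Ex q).mul SX with hA
  set B := (lowPow Ey p).mul SY with hB
  set W := A.union B with hW
  set T := Z.star.mul W with hT
  have hxSY : leq Ex SY := CKA.le_trans (CKA.le_unionVecs hxc) (CKA.le_star _)
  have hWT : leq W T :=
    CKA.le_trans (CKA.le_of_eq (CKA.one_mul W).symm)
      (CKA.mul_le_mul_right W (CKA.one_le_star Z))
  have hZWT : leq (Z.mul W) T := CKA.mul_le_mul_right W (CKA.le_star Z)
  have hSXW : leq SX W := by
    calc SX =k= CRE.one.mul SX := (CKA.one_mul SX).symm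
      _ <=k (lowPow Ex q).mul SX := CKA.mul_le_mul_right SX (CKA.one_le_lowPow hq)
      _ <=k W := CKA.le_union_left A B
  -- SX decomposition
  have hins : insert y ((C.erase x).erase y) = C.erase x := Finset.insert_erase hy
  have hSXdec : CKA SX (Ey.star.mul (unionVecs ((C.erase x).erase y)).star) := by
    set D := (C.erase x).erase y with hD
    rw [hSX, ← hins]
    calc (unionVecs (insert y D)).star
        =k= (Ey.union (unionVecs D)).star :=
          CKA.star_congr (CKA.unionVecs_insert _ _)
      _ =k= Ey.star.mul (unionVecs D).star := CKA.star_union _ _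
  set R2 := (unionVecs ((C.erase x).erase y)).star with hR2
  have hsub : (C.erase x).erase y ⊆ C.erase y :=
    Finset.erase_subset_erase y (Finset.erase_subset x C)
  have hR2SY : leq R2 SY :=
    CKA.star_le_star (CKA.le_trans (CKA.unionVecs_subset hsub) (CKA.le_star _))
  have hpowxSY : leq (pow Ex q) SY := CKA.pow_le_star hxSY q
  -- Ex · B ≤ T
  have hExB : leq (Ex.mul B) T := by
    calc Ex.mul ((lowPow Ey p).mul SY) =k= (lowPow Ey p).mul (Ex.mul SY) :=
        CKA.mul_left_comm _ _ _
      _ <=k (lowPow Ey p).mul SY :=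
        CKA.mul_le_mul_left _ (CKA.mul_le_star hxSY (CKA.le_refl SY))
      _ <=k W := CKA.le_union_right A B
      _ <=k T := hWT
  -- pow Ex q · SX ≤ T
  have hpow : leq ((pow Ex q).mul SX) T := by
    have step1 : CKA ((pow Ex q).mul SX)
        ((pow Ex q).mul ((((lowPow Ey p).union ((pow Ey p).mul Ey.star)).mul R2))) :=
      CKA.mul_congr (CKA.refl _)
        (hSXdec.trans (CKA.mul_congr (CKA.star_split Ey p) (CKA.refl R2)))
    have step2 : CKA ((((lowPow Ey p).union ((pow Ey p).mul Ey.star)).mul R2))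
        (((lowPow Ey p).mul R2).union (((pow Ey p).mul Ey.star).mul R2)) :=
      CKA.right_distrib _ _ _
    have piece1 : leq ((pow Ex q).mul ((lowPow Ey p).mul R2)) T := by
      calc (pow Ex q).mul ((lowPow Ey p).mul R2)
          =k= (lowPow Ey p).mul ((pow Ex q).mul R2) := CKA.mul_left_comm _ _ _
        _ <=k (lowPow Ey p).mul SY :=
          CKA.mul_le_mul_left _ (CKA.mul_le_star hpowxSY hR2SY)
        _ <=k W := CKA.le_union_right A B
        _ <=k T := hWT
    have piece2 : leq ((pow Ex q).mul (((pow Ey p).mul Ey.star).mul R2)) T := by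
      have e1 : CKA ((pow Ex q).mul (((pow Ey p).mul Ey.star).mul R2))
          (((pow Ex q).mul (pow Ey p)).mul (Ey.star.mul R2)) := CKA.mul_assoc4 _ _ _ _
      have e2 : CKA (((pow Ex q).mul (pow Ey p)).mul (Ey.star.mul R2)) (Z.mul SX) :=
        CKA.mul_congr (CKA.exprVec_comb x y q p).symm hSXdec.symm
      calc (pow Ex q).mul (((pow Ey p).mul Ey.star).mul R2)
          =k= Z.mul SX := e1.trans e2
        _ <=k Z.mul W := CKA.mul_le_mul_left Z hSXW
        _ <=k T := hZWT
    calc (pow Ex q).mul SX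
        =k= ((pow Ex q).mul ((lowPow Ey p).mul R2)).union
            ((pow Ex q).mul (((pow Ey p).mul Ey.star).mul R2)) :=
          step1.trans ((CKA.mul_congr (CKA.refl _) step2).trans (CKA.left_distrib _ _ _))
      _ <=k T := CKA.union_le piece1 piece2
  -- Ex · A ≤ T
  have hExA : leq (Ex.mul A) T := by
    calc Ex.mul ((lowPow Ex q).mul SX) =k= (Ex.mul (lowPow Ex q)).mul SX :=
        CKA.mul_assoc _ _ _
      _ <=k ((lowPow Ex q).union (pow Ex q)).mul SX :=
        CKA.mul_le_mul_right SX (CKA.mul_lowPow_le Ex q)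
      _ =k= ((lowPow Ex q).mul SX).union ((pow Ex q).mul SX) := CKA.right_distrib _ _ _
      _ <=k T := CKA.union_le (CKA.le_trans (CKA.le_union_left A B) hWT) hpow
  calc Ex.mul W =k= (Ex.mul A).union (Ex.mul B) := CKA.left_distrib _ _ _
    _ <=k T := CKA.union_le hExA hExB

theorem CKA.split {x y : α → ℕ} {C : Finset (α → ℕ)} (hx : x ∈ C) (hy : y ∈ C.erase x)
    {p q : ℕ} (hp : 0 < p) (hq : 0 < q) :
    CKA (unionVecs C).star
      ((exprVec (q • x + p • y)).star.mul
        (((lowPow (exprVec x) q).mul (unionVecs (C.erase x)).star).union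
         ((lowPow (exprVec y) p).mul (unionVecs (C.erase y)).star))) := by
  have hyx : y ≠ x := (Finset.mem_erase.1 hy).1
  have hxc : x ∈ C.erase y := Finset.mem_erase.2 ⟨fun h => hyx h.symm, hx⟩
  set Ex := exprVec x with hEx
  set Ey := exprVec y with hEy
  set SX := (unionVecs (C.erase x)).star with hSX
  set SY := (unionVecs (C.erase y)).star with hSY
  set Z := exprVec (q • x + p • y) with hZ
  set W := (((lowPow Ex q).mul SX).union ((lowPow Ey p).mul SY)) with hW
  set T := Z.star.mul W with hT
  have hWT : leq W T :=
    CKA.le_trans (CKA.le_of_eq (CKA.one_mul W).symm)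
      (CKA.mul_le_mul_right W (CKA.one_le_star Z))
  apply CKA.le_antisymm
  · apply CKA.star_le
    · calc CRE.one =k= CRE.one.mul CRE.one := (CKA.one_mul _).symm
        _ <=k (lowPow Ex q).mul SX :=
          CKA.mul_le_mul (CKA.one_le_lowPow hq) (CKA.one_le_star _)
        _ <=k W := CKA.le_union_left _ _
        _ <=k T := hWT
    · -- (unionVecs C) · T ≤ T
      apply CKA.le_congr (CKA.unionList_mul T (C.toList.map exprVec)).symm (CKA.refl T)
      apply CKA.unionList_le
      intro g hg
      rcases List.mem_map.1 hg with ⟨h0, hh0, rfl⟩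
      rcases List.mem_map.1 hh0 with ⟨v, hv, rfl⟩
      have hvC : v ∈ C := Finset.mem_toList.1 hv
      -- reduce to (exprVec v).mul W ≤ T
      suffices hvW : leq ((exprVec v).mul W) T by
        calc (exprVec v).mul T =k= Z.star.mul ((exprVec v).mul W) := CKA.mul_left_comm _ _ _
          _ <=k Z.star.mul T := CKA.mul_le_mul_left _ hvW
          _ =k= (Z.star.mul Z.star).mul W := CKA.mul_assoc _ _ _
          _ =k= T := CKA.mul_congr (CKA.star_mul_star Z) (CKA.refl W)
      by_cases hvx : v = x
      · subst hvx
        exact CKA.caseX hy hxc hp hq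
      by_cases hvy : v = y
      · subst hvy
        have h := CKA.caseX (x := v) (y := x) (C := C) hxc
          (Finset.mem_erase.2 ⟨hyx, hvC⟩) hq hp
        have hadd : q • x + p • v = p • v + q • x := add_comm _ _
        calc (exprVec v).mul W
            =k= (exprVec v).mul ((((lowPow Ey p).mul SY)).union ((lowPow Ex q).mul SX)) :=
              CKA.mul_congr (CKA.refl _) (CKA.union_comm _ _)
          _ <=k (exprVec (p • v + q • x)).star.mul
              ((((lowPow Ey p).mul SY)).union ((lowPow Ex q).mul SX)) := h
          _ =k= T := by
              rw [hT, hZ, hadd]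
              exact CKA.mul_congr (CKA.refl _) (CKA.union_comm _ _)
      · -- v distinct from x and y
        have hvex : v ∈ C.erase x := Finset.mem_erase.2 ⟨hvx, hvC⟩
        have hvey : v ∈ C.erase y := Finset.mem_erase.2 ⟨hvy, hvC⟩
        have h1 : leq ((exprVec v).mul ((lowPow Ex q).mul SX)) W := by
          calc (exprVec v).mul ((lowPow Ex q).mul SX)
              =k= (lowPow Ex q).mul ((exprVec v).mul SX) := CKA.mul_left_comm _ _ _
            _ <=k (lowPow Ex q).mul SX := CKA.mul_le_mul_left _
                (CKA.mul_le_star (CKA.le_trans (CKA.le_unionVecs hvex) (CKA.le_star _))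
                  (CKA.le_refl SX))
            _ <=k W := CKA.le_union_left _ _
        have h2 : leq ((exprVec v).mul ((lowPow Ey p).mul SY)) W := by
          calc (exprVec v).mul ((lowPow Ey p).mul SY)
              =k= (lowPow Ey p).mul ((exprVec v).mul SY) := CKA.mul_left_comm _ _ _
            _ <=k (lowPow Ey p).mul SY := CKA.mul_le_mul_left _
                (CKA.mul_le_star (CKA.le_trans (CKA.le_unionVecs hvey) (CKA.le_star _))
                  (CKA.le_refl SY))
            _ <=k W := CKA.le_union_right _ _
        calc (exprVec v).mul W
            =k= ((exprVec v).mul ((lowPow Ex q).mul SX)).union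
                ((exprVec v).mul ((lowPow Ey p).mul SY)) := CKA.left_distrib _ _ _
          _ <=k W := CKA.union_le h1 h2
          _ <=k T := hWT
  · -- T ≤ (unionVecs C)*
    have hxS : leq Ex (unionVecs C).star := CKA.le_trans (CKA.le_unionVecs hx) (CKA.le_star _)
    have hyS : leq Ey (unionVecs C).star :=
      CKA.le_trans (CKA.le_unionVecs (Finset.mem_erase.1 hy).2) (CKA.le_star _)
    have hZS : leq Z (unionVecs C).star := by
      calc Z =k= (pow Ex q).mul (pow Ey p) := CKA.exprVec_comb x y q p
        _ <=k (unionVecs C).star :=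
          CKA.mul_le_star (CKA.pow_le_star hxS q) (CKA.pow_le_star hyS p)
    have hSXS : leq SX (unionVecs C).star :=
      CKA.star_le_star (CKA.le_trans (CKA.unionVecs_subset (Finset.erase_subset x C))
        (CKA.le_star _))
    have hSYS : leq SY (unionVecs C).star :=
      CKA.star_le_star (CKA.le_trans (CKA.unionVecs_subset (Finset.erase_subset y C))
        (CKA.le_star _))
    apply CKA.mul_le_star (CKA.star_le_star hZS)
    apply CKA.union_le
    · exact CKA.mul_le_star (CKA.lowPow_le_star hxS q) hSXS
    · exact CKA.mul_le_star (CKA.lowPow_le_star hyS p) hSYS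

/-! ### semiLin version of the splitting identity -/

theorem CKA.linExpr_block (u w z : α → ℕ) (n : ℕ) (D : Finset (α → ℕ)) :
    CKA ((exprVec u).mul ((exprVec z).star.mul ((lowPow (exprVec w) n).mul (unionVecs D).star)))
      (semiLin ((List.range n).map (fun i => (u + i • w, insert z D)))) := by
  set S := (unionVecs (insert z D)).star with hS
  have hSdec : CKA S ((exprVec z).star.mul (unionVecs D).star) := by
    calc (unionVecs (insert z D)).star
        =k= ((exprVec z).union (unionVecs D)).star := CKA.star_congr (CKA.unionVecs_insert _ _)
      _ =k= (exprVec z).star.mul (unionVecs D).star := CKA.star_union _ _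
  set G := (exprVec u).mul S with hG
  have step1 : CKA ((exprVec u).mul ((exprVec z).star.mul ((lowPow (exprVec w) n).mul (unionVecs D).star)))
      ((lowPow (exprVec w) n).mul G) := by
    calc (exprVec u).mul ((exprVec z).star.mul ((lowPow (exprVec w) n).mul (unionVecs D).star))
        =k= (exprVec u).mul ((lowPow (exprVec w) n).mul ((exprVec z).star.mul (unionVecs D).star)) :=
          CKA.mul_congr (CKA.refl _) (CKA.mul_left_comm _ _ _)
      _ =k= (lowPow (exprVec w) n).mul ((exprVec u).mul ((exprVec z).star.mul (unionVecs D).star)) :=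
          CKA.mul_left_comm _ _ _
      _ =k= (lowPow (exprVec w) n).mul G :=
          CKA.mul_congr (CKA.refl _) (CKA.mul_congr (CKA.refl _) hSdec.symm)
  have step2 : CKA ((lowPow (exprVec w) n).mul G)
      (unionList ((List.range n).map (fun i => (pow (exprVec w) i).mul G))) := by
    unfold lowPow
    calc (unionList ((List.range n).map (pow (exprVec w)))).mul G
        =k= unionList (((List.range n).map (pow (exprVec w))).map (fun x => x.mul G)) :=
          CKA.unionList_mul G _
      _ =k= unionList ((List.range n).map (fun i => (pow (exprVec w) i).mul G)) := by
          rw [List.map_map]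
          exact CKA.refl _
  have step3 : CKA (unionList ((List.range n).map (fun i => (pow (exprVec w) i).mul G)))
      (unionList ((List.range n).map (fun i => linExpr (u + i • w) (insert z D)))) := by
    apply CKA.unionList_map_congr
    intro i _
    have e1 : CKA (exprVec (u + i • w)) ((exprVec u).mul (pow (exprVec w) i)) :=
      (CKA.exprVec_add u (i • w)).trans (CKA.mul_congr (CKA.refl _) (CKA.exprVec_smul i w))
    calc (pow (exprVec w) i).mul G
        =k= ((pow (exprVec w) i).mul (exprVec u)).mul S := CKA.mul_assoc _ _ _
      _ =k= (exprVec (u + i • w)).mul S :=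
          CKA.mul_congr ((CKA.mul_comm _ _).trans e1.symm) (CKA.refl S)
  have step4 : CKA (unionList ((List.range n).map (fun i => linExpr (u + i • w) (insert z D))))
      (semiLin ((List.range n).map (fun i => (u + i • w, insert z D)))) := by
    unfold semiLin
    rw [List.map_map]
    exact CKA.refl _
  exact ((step1.trans step2).trans step3).trans step4

theorem CKA.splitSL {x y : α → ℕ} {C : Finset (α → ℕ)} (hx : x ∈ C) (hy : y ∈ C.erase x)
    {p q : ℕ} (hp : 0 < p) (hq : 0 < q) (u : α → ℕ) :
    CKA (linExpr u C)
      (semiLin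
        (((List.range q).map (fun i => (u + i • x, insert (q • x + p • y) (C.erase x)))) ++
         ((List.range p).map (fun i => (u + i • y, insert (q • x + p • y) (C.erase y)))))) := by
  set Z := exprVec (q • x + p • y) with hZ
  set A := (lowPow (exprVec x) q).mul (unionVecs (C.erase x)).star with hA
  set B := (lowPow (exprVec y) p).mul (unionVecs (C.erase y)).star with hB
  calc linExpr u C
      =k= (exprVec u).mul (Z.star.mul (A.union B)) :=
        CKA.mul_congr (CKA.refl _) (CKA.split hx hy hp hq)
    _ =k= (exprVec u).mul ((Z.star.mul A).union (Z.star.mul B)) :=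
        CKA.mul_congr (CKA.refl _) (CKA.left_distrib _ _ _)
    _ =k= ((exprVec u).mul (Z.star.mul A)).union ((exprVec u).mul (Z.star.mul B)) :=
        CKA.left_distrib _ _ _
    _ =k= (semiLin ((List.range q).map (fun i => (u + i • x, insert (q • x + p • y) (C.erase x))))).union
          (semiLin ((List.range p).map (fun i => (u + i • y, insert (q • x + p • y) (C.erase y))))) :=
        CKA.union_congr (CKA.linExpr_block u x _ q (C.erase x))
          (CKA.linExpr_block u y _ p (C.erase y))
    _ =k= semiLin
        (((List.range q).map (fun i => (u + i • x, insert (q • x + p • y) (C.erase x)))) ++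
         ((List.range p).map (fun i => (u + i • y, insert (q • x + p • y) (C.erase y))))) :=
        (CKA.semiLin_append _ _).symm

theorem CKA.refine_ex {M : List ((α → ℕ) × Finset (α → ℕ))}
    {P : (α → ℕ) × Finset (α → ℕ) → Prop}
    (h : ∀ r ∈ M, ∃ Lr, CKA (linExpr r.1 r.2) (semiLin Lr) ∧ ∀ r' ∈ Lr, P r') :
    ∃ L, CKA (semiLin M) (semiLin L) ∧ ∀ r' ∈ L, P r' := by
  induction M with
  | nil => exact ⟨[], CKA.refl _, by simp⟩
  | cons r M ih =>
    obtain ⟨Lr, h1, h2⟩ := h r (List.mem_cons_self (a := r) (l := M))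
    obtain ⟨L, h3, h4⟩ := ih (fun r' hr' => h r' (List.mem_cons_of_mem r hr'))
    refine ⟨Lr ++ L, (CKA.union_congr h1 h3).trans (CKA.semiLin_append _ _).symm, ?_⟩
    intro r' hr'
    rcases List.mem_append.1 hr' with hr' | hr'
    · exact h2 r' hr'
    · exact h4 r' hr'

/-! ### Homogenization with respect to a basis -/

theorem toQ_add (u v : α → ℕ) : toQ (u + v) = toQ u + toQ v := by
  funext a
  simp [toQ]

theorem toQ_zero : toQ (0 : α → ℕ) = 0 := by
  funext a
  simp [toQ]

theorem toQ_smul (n : ℕ) (u : α → ℕ) : toQ (n • u) = (n : ℚ) • toQ u := by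
  funext a
  simp [toQ]

section Basis

variable {𝔹 : Finset (α → ℕ)} (bas : Module.Basis (↥𝔹) ℚ (α → ℚ))

/-- Purity of a set of periods at a basis coordinate. -/
def PureAt (b : ↥𝔹) (A : Finset (α → ℕ)) : Prop :=
  (∀ w ∈ A, 0 ≤ bas.repr (toQ w) b) ∨ (∀ w ∈ A, bas.repr (toQ w) b ≤ 0)

theorem coord_add (u v : α → ℕ) (b : ↥𝔹) :
    bas.repr (toQ (u + v)) b = bas.repr (toQ u) b + bas.repr (toQ v) b := by
  rw [toQ_add, map_add]
  rfl

theorem coord_zero (b : ↥𝔹) : bas.repr (toQ (0 : α → ℕ)) b = 0 := by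
  rw [toQ_zero, map_zero]
  rfl

theorem coord_smul (n : ℕ) (u : α → ℕ) (b : ↥𝔹) :
    bas.repr (toQ (n • u)) b = (n : ℚ) * bas.repr (toQ u) b := by
  rw [toQ_smul, map_smul]
  simp

theorem coord_nonneg_closure {b : ↥𝔹} {C : Finset (α → ℕ)}
    (hC : ∀ v ∈ C, 0 ≤ bas.repr (toQ v) b) {w : α → ℕ}
    (hw : w ∈ AddSubmonoid.closure (↑C : Set (α → ℕ))) : 0 ≤ bas.repr (toQ w) b := by
  induction hw using AddSubmonoid.closure_induction with
  | mem v hv => exact hC v hv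
  | zero => rw [coord_zero]
  | add u v _ _ hu hv => rw [coord_add]; positivity

theorem coord_nonpos_closure {b : ↥𝔹} {C : Finset (α → ℕ)}
    (hC : ∀ v ∈ C, bas.repr (toQ v) b ≤ 0) {w : α → ℕ}
    (hw : w ∈ AddSubmonoid.closure (↑C : Set (α → ℕ))) : bas.repr (toQ w) b ≤ 0 := by
  induction hw using AddSubmonoid.closure_induction with
  | mem v hv => exact hC v hv
  | zero => rw [coord_zero]
  | add u v _ _ hu hv => rw [coord_add]; linarith

theorem PureAt.transfer {b : ↥𝔹} {C A : Finset (α → ℕ)} (h : PureAt bas b C)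
    (hA : (↑A : Set (α → ℕ)) ⊆ AddSubmonoid.closure (↑C : Set (α → ℕ))) :
    PureAt bas b A := by
  rcases h with h | h
  · exact Or.inl fun w hw => coord_nonneg_closure bas h (hA hw)
  · exact Or.inr fun w hw => coord_nonpos_closure bas h (hA hw)

theorem rat_pq {s t : ℚ} (hs : 0 < s) (ht : 0 < t) :
    ∃ p q : ℕ, 0 < p ∧ 0 < q ∧ (q : ℚ) * s = (p : ℚ) * t := by
  refine ⟨(s.num.toNat) * t.den, (t.num.toNat) * s.den, ?_, ?_, ?_⟩
  · have h1 : 0 < s.num := Rat.num_pos.2 hs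
    exact Nat.mul_pos (by omega) (Nat.pos_of_ne_zero t.den_ne_zero)
  · have h1 : 0 < t.num := Rat.num_pos.2 ht
    exact Nat.mul_pos (by omega) (Nat.pos_of_ne_zero s.den_ne_zero)
  · have hsden : ((s.den : ℚ)) ≠ 0 := by exact_mod_cast s.den_ne_zero
    have htden : ((t.den : ℚ)) ≠ 0 := by exact_mod_cast t.den_ne_zero
    have hs1 : ((s.num : ℤ) : ℚ) = s * (s.den : ℚ) := (div_eq_iff hsden).1 (Rat.num_div_den s)
    have ht1 : ((t.num : ℤ) : ℚ) = t * (t.den : ℚ) := (div_eq_iff htden).1 (Rat.num_div_den t)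
    have hsn : ((s.num.toNat : ℕ) : ℚ) = ((s.num : ℤ) : ℚ) := by
      rw [← Int.cast_natCast, Int.toNat_of_nonneg (le_of_lt (Rat.num_pos.2 hs))]
    have htn : ((t.num.toNat : ℕ) : ℚ) = ((t.num : ℤ) : ℚ) := by
      rw [← Int.cast_natCast, Int.toNat_of_nonneg (le_of_lt (Rat.num_pos.2 ht))]
    push_cast
    rw [htn, hsn, hs1, ht1]
    ring

/-- Homogenize one coordinate. -/
theorem homAt (b : ↥𝔹) :
    ∀ n : ℕ, ∀ C : Finset (α → ℕ),
      (C.filter (fun v => bas.repr (toQ v) b ≠ 0)).card ≤ n →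
      ∀ u : α → ℕ, ∃ L, CKA (linExpr u C) (semiLin L) ∧
        ∀ r ∈ L, (↑r.2 : Set (α → ℕ)) ⊆ AddSubmonoid.closure (↑C : Set (α → ℕ)) ∧
          PureAt bas b r.2 := by
  intro n
  induction n with
  | zero =>
    intro C hcard u
    refine ⟨[(u, C)], (CKA.semiLin_single (u, C)).symm, ?_⟩
    intro r hr
    rcases List.mem_singleton.1 hr with rfl
    refine ⟨AddSubmonoid.subset_closure, Or.inl ?_⟩
    intro w hw
    have : (C.filter (fun v => bas.repr (toQ v) b ≠ 0)) = ∅ :=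
      Finset.card_eq_zero.1 (Nat.le_zero.1 hcard)
    by_contra hne
    have hw0 : bas.repr (toQ w) b ≠ 0 := by intro h0; rw [h0] at hne; exact hne le_rfl
    have : w ∈ (∅ : Finset (α → ℕ)) := this ▸ Finset.mem_filter.2 ⟨hw, hw0⟩
    simp at this
  | succ m ih =>
    intro C hcard u
    by_cases hpure : PureAt bas b C
    · refine ⟨[(u, C)], (CKA.semiLin_single (u, C)).symm, ?_⟩
      intro r hr
      rcases List.mem_singleton.1 hr with rfl
      exact ⟨AddSubmonoid.subset_closure, hpure⟩
    · -- find a mixed pair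
      have hmix : (∃ x ∈ C, 0 < bas.repr (toQ x) b) ∧ ∃ y ∈ C, bas.repr (toQ y) b < 0 := by
        unfold PureAt at hpure
        push_neg at hpure
        obtain ⟨⟨y0, hy0, hy0'⟩, x0, hx0, hx0'⟩ := hpure
        exact ⟨⟨x0, hx0, hx0'⟩, ⟨y0, hy0, hy0'⟩⟩
      obtain ⟨⟨x, hxC, hxpos⟩, y, hyC, hyneg⟩ := hmix
      have hxy : x ≠ y := by
        intro h
        rw [h] at hxpos
        exact absurd hxpos (not_lt.2 hyneg.le)
      have hyex : y ∈ C.erase x := Finset.mem_erase.2 ⟨fun h => hxy h.symm, hyC⟩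
      obtain ⟨p, q, hp, hq, hpq⟩ := rat_pq hxpos (neg_pos.2 hyneg)
      set z := q • x + p • y with hz
      have hzcoord : bas.repr (toQ z) b = 0 := by
        rw [hz, coord_add, coord_smul, coord_smul]
        have : (q : ℚ) * bas.repr (toQ x) b = (p : ℚ) * (-bas.repr (toQ y) b) := hpq
        linarith
      have hzmem : z ∈ AddSubmonoid.closure (↑C : Set (α → ℕ)) :=
        AddSubmonoid.add_mem _
          (AddSubmonoid.nsmul_mem _ (AddSubmonoid.subset_closure hxC) q)
          (AddSubmonoid.nsmul_mem _ (AddSubmonoid.subset_closure hyC) p)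
      -- card decrease
      have hdec : ∀ w0 : α → ℕ, w0 ∈ C → bas.repr (toQ w0) b ≠ 0 →
          ((insert z (C.erase w0)).filter (fun v => bas.repr (toQ v) b ≠ 0)).card ≤ m := by
        intro w0 hw0 hw0'
        have hsub : (insert z (C.erase w0)).filter (fun v => bas.repr (toQ v) b ≠ 0) ⊆
            (C.filter (fun v => bas.repr (toQ v) b ≠ 0)).erase w0 := by
          intro v hv
          rcases Finset.mem_filter.1 hv with ⟨hv1, hv2⟩
          rcases Finset.mem_insert.1 hv1 with rfl | hv1
          · exact absurd hzcoord hv2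
          · exact Finset.mem_erase.2 ⟨(Finset.mem_erase.1 hv1).1,
              Finset.mem_filter.2 ⟨(Finset.mem_erase.1 hv1).2, hv2⟩⟩
        have hw0f : w0 ∈ C.filter (fun v => bas.repr (toQ v) b ≠ 0) :=
          Finset.mem_filter.2 ⟨hw0, hw0'⟩
        calc ((insert z (C.erase w0)).filter (fun v => bas.repr (toQ v) b ≠ 0)).card
            ≤ ((C.filter (fun v => bas.repr (toQ v) b ≠ 0)).erase w0).card :=
              Finset.card_le_card hsub
          _ = (C.filter (fun v => bas.repr (toQ v) b ≠ 0)).card - 1 :=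
              Finset.card_erase_of_mem hw0f
          _ ≤ m := by omega
      have hsplit := CKA.splitSL hxC hyex hp hq u
      have hC1 : (↑(insert z (C.erase x)) : Set (α → ℕ)) ⊆
          AddSubmonoid.closure (↑C : Set (α → ℕ)) := by
        intro v hv
        rcases Finset.mem_insert.1 hv with rfl | hv
        · exact hzmem
        · exact AddSubmonoid.subset_closure (Finset.mem_of_mem_erase hv)
      have hC2 : (↑(insert z (C.erase y)) : Set (α → ℕ)) ⊆
          AddSubmonoid.closure (↑C : Set (α → ℕ)) := by
        intro v hv
        rcases Finset.mem_insert.1 hv with rfl | hv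
        · exact hzmem
        · exact AddSubmonoid.subset_closure (Finset.mem_of_mem_erase hv)
      have hstep : ∀ r ∈ (((List.range q).map (fun i => (u + i • x, insert z (C.erase x)))) ++
          ((List.range p).map (fun i => (u + i • y, insert z (C.erase y))))),
          ∃ Lr, CKA (linExpr r.1 r.2) (semiLin Lr) ∧
            ∀ r' ∈ Lr, (↑r'.2 : Set (α → ℕ)) ⊆ AddSubmonoid.closure (↑C : Set (α → ℕ)) ∧
              PureAt bas b r'.2 := by
        intro r hr
        have hr2 : r.2 = insert z (C.erase x) ∨ r.2 = insert z (C.erase y) := by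
          rcases List.mem_append.1 hr with hr | hr
          · rcases List.mem_map.1 hr with ⟨i, _, rfl⟩; exact Or.inl rfl
          · rcases List.mem_map.1 hr with ⟨i, _, rfl⟩; exact Or.inr rfl
        rcases hr2 with hr2 | hr2
        · obtain ⟨Lr, hLr1, hLr2⟩ := ih (insert z (C.erase x))
            (hdec x hxC (ne_of_gt hxpos)) r.1
          rw [hr2]
          refine ⟨Lr, hLr1, ?_⟩
          intro r' hr'
          obtain ⟨hsub', hpure'⟩ := hLr2 r' hr'
          refine ⟨fun v hv => ?_, hpure'⟩
          have := hsub' hv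
          exact AddSubmonoid.closure_le.2 hC1 this
        · obtain ⟨Lr, hLr1, hLr2⟩ := ih (insert z (C.erase y))
            (hdec y hyC (ne_of_lt hyneg)) r.1
          rw [hr2]
          refine ⟨Lr, hLr1, ?_⟩
          intro r' hr'
          obtain ⟨hsub', hpure'⟩ := hLr2 r' hr'
          refine ⟨fun v hv => ?_, hpure'⟩
          have := hsub' hv
          exact AddSubmonoid.closure_le.2 hC2 this
      obtain ⟨L, hL1, hL2⟩ := CKA.refine_ex hstep
      exact ⟨L, hsplit.trans hL1, hL2⟩

/-- Homogenize a list of coordinates. -/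
theorem homList (bs : List ↥𝔹) :
    ∀ C : Finset (α → ℕ), ∀ u : α → ℕ, ∃ L, CKA (linExpr u C) (semiLin L) ∧
      ∀ r ∈ L, (↑r.2 : Set (α → ℕ)) ⊆ AddSubmonoid.closure (↑C : Set (α → ℕ)) ∧
        ∀ b ∈ bs, PureAt bas b r.2 := by
  induction bs with
  | nil =>
    intro C u
    refine ⟨[(u, C)], (CKA.semiLin_single (u, C)).symm, ?_⟩
    intro r hr
    rcases List.mem_singleton.1 hr with rfl
    exact ⟨AddSubmonoid.subset_closure, by simp⟩
  | cons b bs ih =>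
    intro C u
    obtain ⟨L1, hL1, hL1p⟩ := homAt bas b
      ((C.filter (fun v => bas.repr (toQ v) b ≠ 0)).card) C le_rfl u
    have hstep : ∀ r ∈ L1, ∃ Lr, CKA (linExpr r.1 r.2) (semiLin Lr) ∧
        ∀ r' ∈ Lr, (↑r'.2 : Set (α → ℕ)) ⊆ AddSubmonoid.closure (↑C : Set (α → ℕ)) ∧
          ∀ b' ∈ (b :: bs), PureAt bas b' r'.2 := by
      intro r hr
      obtain ⟨hsubC, hpureb⟩ := hL1p r hr
      obtain ⟨Lr, hLr1, hLr2⟩ := ih r.2 r.1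
      refine ⟨Lr, hLr1, ?_⟩
      intro r' hr'
      obtain ⟨hsub', hbs⟩ := hLr2 r' hr'
      have hsubCl : (↑r'.2 : Set (α → ℕ)) ⊆ AddSubmonoid.closure (↑C : Set (α → ℕ)) := by
        intro v hv
        exact AddSubmonoid.closure_le.2 hsubC (hsub' hv)
      refine ⟨hsubCl, ?_⟩
      intro b' hb'
      rcases List.mem_cons.1 hb' with rfl | hb'
      · exact PureAt.transfer bas hpureb hsub'
      · exact hbs b' hb'
    obtain ⟨L, h1, h2⟩ := CKA.refine_ex hstep
    exact ⟨L, hL1.trans h1, h2⟩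

end Basis

/-- Every expression is provably equal to a finite union of homogeneous
linear expressions, where homogeneity is with respect to a basis `𝔹` of
`ℚ^α` consisting of Parikh vectors. -/
theorem homogeneous_decomposition (𝔹 : Finset (α → ℕ))
    (bas : Module.Basis (↥𝔹) ℚ (α → ℚ)) (hbas : ∀ b : ↥𝔹, bas b = toQ (b : α → ℕ))
    (e : CRE α) :
    ∃ L : List ((α → ℕ) × Finset (α → ℕ)),
      CKA e (semiLin L) ∧
      ∀ p ∈ L, ∀ b : ↥𝔹, ∀ x ∈ p.2, ∀ y ∈ p.2,
        0 < bas.repr (toQ x) b → 0 ≤ bas.repr (toQ y) b := by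
  obtain ⟨L0, hL0⟩ := CKA.toSemiLin e
  have hstep : ∀ r ∈ L0, ∃ Lr, CKA (linExpr r.1 r.2) (semiLin Lr) ∧
      ∀ r' ∈ Lr, ∀ b : ↥𝔹, PureAt bas b r'.2 := by
    intro r _
    obtain ⟨Lr, h1, h2⟩ := homList bas ((Finset.univ : Finset ↥𝔹).toList) r.2 r.1
    exact ⟨Lr, h1, fun r' hr' b => (h2 r' hr').2 b (Finset.mem_toList.2 (Finset.mem_univ b))⟩
  obtain ⟨L, h1, h2⟩ := CKA.refine_ex hstep
  refine ⟨L, hL0.trans h1, ?_⟩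
  intro p hp b x hx y hy hxpos
  rcases h2 p hp b with h | h
  · exact h y hy
  · exact absurd hxpos (not_lt.2 (h x hx))

end CKAnote
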